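/- For α > 2, θ > 0, r > 0, and h ≥ 0, the integral ∫_r^∞ (1 - 1/(1 + θ·((t²+h²)/(r²+h²))^(-α/2)))·t dt equals (1/2)·(r² + h²)·ψ(θ), where ψ(z) = (2z/(α-2))·₂F₁(1, 1 - 2/α, 2 - 2/α, -z). -/

import Mathlib

open Real MeasureTheory Set

/-- Gauss hypergeometric function `₂F₁(a,b;c;z)` via Euler's integral representation. -/
noncomputable def hyp2F1 (a b c z : ℝ) : ℝ :=
  (Real.Gamma c / (Real.Gamma b * Real.Gamma (c - b))) *
    ∫ t in Ioo (0 : ℝ) 1, t ^ (b - 1) * (1 - t) ^ (c - b - 1) * (1 - z * t) ^ (-a)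

noncomputable def psi (α z : ℝ) : ℝ :=
  (2 * z / (α - 2)) * hyp2F1 1 (1 - 2 / α) (2 - 2 / α) (-z)

set_option maxHeartbeats 1000000

theorem coverage_inner_integral (α θ r h : ℝ)
    (hα : 2 < α) (hθ : 0 < θ) (hr : 0 < r) (hh : 0 ≤ h) :
    (∫ t in Ioi r,
        (1 - 1 / (1 + θ * ((t ^ 2 + h ^ 2) / (r ^ 2 + h ^ 2)) ^ (-(α / 2)))) * t)
      = (1 / 2) * (r ^ 2 + h ^ 2) * psi α θ := by
  have hα0 : (0:ℝ) < α := by linarith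
  have hA : (0:ℝ) < r ^ 2 + h ^ 2 := by positivity
  set A : ℝ := r ^ 2 + h ^ 2 with hAdef
  have hb : (0:ℝ) < 1 - 2 / α := by
    have : 2 / α < 1 := (div_lt_one hα0).mpr (by linarith)
    linarith
  set f : ℝ → ℝ := fun t => ((t ^ 2 + h ^ 2) / A) ^ (-(α / 2)) with hfdef
  set f' : ℝ → ℝ := fun t =>
    (-(α / 2)) * ((t ^ 2 + h ^ 2) / A) ^ (-(α / 2) - 1) * (2 * t / A) with hf'def
  set g : ℝ → ℝ := fun s =>
    s ^ ((1 - 2 / α) - 1) * (1 - s) ^ ((2 - 2 / α) - (1 - 2 / α) - 1) *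
      (1 - (-θ) * s) ^ (-(1:ℝ)) with hgdef
  -- basic facts for t > r
  have hm : ∀ t ∈ Ioi r, 1 < (t ^ 2 + h ^ 2) / A := by
    intro t ht
    rw [lt_div_iff₀ hA]
    have : r < t := ht
    nlinarith
  have hfpos : ∀ t ∈ Ioi r, 0 < f t := by
    intro t ht
    exact Real.rpow_pos_of_pos (by linarith [hm t ht]) _
  have hflt1 : ∀ t ∈ Ioi r, f t < 1 := by
    intro t ht
    exact Real.rpow_lt_one_of_one_lt_of_neg (hm t ht) (by linarith)
  -- derivative
  have hderiv : ∀ t ∈ Ioi r, HasDerivWithinAt f (f' t) (Ioi r) t := by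
    intro t ht
    have h1 : HasDerivAt (fun t : ℝ => (t ^ 2 + h ^ 2) / A) (2 * t / A) t := by
      have : HasDerivAt (fun t : ℝ => t ^ 2 + h ^ 2) (2 * t) t := by
        simpa using ((hasDerivAt_pow 2 t).add_const (h ^ 2))
      exact this.div_const A
    have h2 := h1.rpow_const (p := -(α / 2))
      (Or.inl (by linarith [hm t ht] : (t ^ 2 + h ^ 2) / A ≠ 0))
    exact (h2.congr_deriv (by ring)).hasDerivWithinAt
  -- injectivity
  have hinj : InjOn f (Ioi r) := by
    intro x hx y hy hxy
    have hmx : (0:ℝ) ≤ (x ^ 2 + h ^ 2) / A := by linarith [hm x hx]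
    have hmy : (0:ℝ) ≤ (y ^ 2 + h ^ 2) / A := by linarith [hm y hy]
    have := Real.rpow_left_injOn (x := -(α / 2)) (by linarith : -(α/2) ≠ 0) hmx hmy hxy
    have hxy2 : x ^ 2 = y ^ 2 := by
      field_simp at this
      linarith
    have hx0 : 0 < x := lt_trans hr hx
    have hy0 : 0 < y := lt_trans hr hy
    nlinarith
  -- image
  have himg : f '' Ioi r = Ioo (0:ℝ) 1 := by
    ext s
    constructor
    · rintro ⟨t, ht, rfl⟩
      exact ⟨hfpos t ht, hflt1 t ht⟩
    · rintro ⟨hs0, hs1⟩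
      have hu : 1 < s ^ (-(2 / α)) := by
        rw [Real.one_lt_rpow_iff_of_pos hs0]
        right
        constructor
        · exact hs1
        · have : 0 < 2 / α := by positivity
          linarith
      set u : ℝ := s ^ (-(2 / α)) with hudef
      have hAu : r ^ 2 < A * u - h ^ 2 := by nlinarith
      refine ⟨Real.sqrt (A * u - h ^ 2), ?_, ?_⟩
      · exact Real.lt_sqrt_of_sq_lt hAu
      · have hsq : Real.sqrt (A * u - h ^ 2) ^ 2 = A * u - h ^ 2 :=
          Real.sq_sqrt (by nlinarith)
        have hmm : (Real.sqrt (A * u - h ^ 2) ^ 2 + h ^ 2) / A = u := by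
          rw [hsq]; field_simp; ring
        show ((Real.sqrt (A * u - h ^ 2) ^ 2 + h ^ 2) / A) ^ (-(α / 2)) = s
        rw [hmm, hudef, ← Real.rpow_mul hs0.le]
        have : -(2 / α) * -(α / 2) = 1 := by field_simp
        rw [this, Real.rpow_one]
  -- pointwise identity
  have key : ∀ t ∈ Ioi r,
      (1 - 1 / (1 + θ * ((t ^ 2 + h ^ 2) / A) ^ (-(α / 2)))) * t
        = (θ * A / α) * (|f' t| * g (f t)) := by
    intro t ht
    have ht0 : 0 < t := lt_trans hr ht
    have hmt : 1 < (t ^ 2 + h ^ 2) / A := hm t ht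
    set M : ℝ := (t ^ 2 + h ^ 2) / A with hMdef
    have hM0 : 0 < M := by linarith
    have hF0 : 0 < f t := hfpos t ht
    have hF1 : f t < 1 := hflt1 t ht
    have h1θ : 0 < 1 + θ * f t := by nlinarith
    -- compute |f' t|
    have habs : |f' t| = (α / 2) * M ^ (-(α / 2) - 1) * (2 * t / A) := by
      have hneg : f' t = -((α / 2) * M ^ (-(α / 2) - 1) * (2 * t / A)) := by
        simp only [hf'def]; ring
      rw [hneg, abs_neg, abs_of_pos]
      have : (0:ℝ) < M ^ (-(α / 2) - 1) := Real.rpow_pos_of_pos hM0 _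
      positivity
    -- compute g (f t)
    have hg1 : (f t) ^ ((1 - 2 / α) - 1) = M := by
      show (M ^ (-(α / 2))) ^ ((1 - 2 / α) - 1) = M
      rw [← Real.rpow_mul hM0.le,
        show -(α / 2) * ((1 - 2 / α) - 1) = (1:ℝ) by field_simp; ring, Real.rpow_one]
    have hg2 : (1 - f t) ^ ((2 - 2 / α) - (1 - 2 / α) - 1) = 1 := by
      have : (2 - 2 / α) - (1 - 2 / α) - 1 = (0:ℝ) := by ring
      rw [this, Real.rpow_zero]
    have hg3 : (1 - (-θ) * f t) ^ (-(1:ℝ)) = (1 + θ * f t)⁻¹ := by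
      rw [show 1 - (-θ) * f t = 1 + θ * f t by ring, Real.rpow_neg_one]
    have hgv : g (f t) = M * (1 + θ * f t)⁻¹ := by
      simp only [hgdef, hg1, hg2, hg3]; ring
    have hM1 : M ^ (-(α / 2) - 1) = f t / M := by
      show M ^ (-(α / 2) - 1) = M ^ (-(α / 2)) / M
      rw [Real.rpow_sub hM0, Real.rpow_one]
    rw [habs, hgv, hM1]
    show (1 - 1 / (1 + θ * f t)) * t
      = (θ * A / α) * ((α / 2) * (f t / M) * (2 * t / A) * (M * (1 + θ * f t)⁻¹))
    field_simp
    ring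
  -- main computation
  have hEq1 : (∫ t in Ioi r,
      (1 - 1 / (1 + θ * ((t ^ 2 + h ^ 2) / A) ^ (-(α / 2)))) * t)
    = (θ * A / α) * ∫ s in Ioo (0:ℝ) 1, g s := by
    rw [setIntegral_congr_fun measurableSet_Ioi key, integral_const_mul, ← himg,
      integral_image_eq_integral_abs_deriv_smul measurableSet_Ioi hderiv hinj g]
    simp [smul_eq_mul]
  rw [hEq1]
  -- now compute the RHS
  have hΓb : (0:ℝ) < Real.Gamma (1 - 2 / α) := Real.Gamma_pos_of_pos hb
  have hc : (2:ℝ) - 2 / α = (1 - 2 / α) + 1 := by ring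
  have hΓc : Real.Gamma (2 - 2 / α) = (1 - 2 / α) * Real.Gamma (1 - 2 / α) := by
    rw [hc, Real.Gamma_add_one hb.ne']
  have hΓcb : Real.Gamma ((2 - 2 / α) - (1 - 2 / α)) = 1 := by
    rw [show (2 - 2 / α) - (1 - 2 / α) = (1:ℝ) by ring, Real.Gamma_one]
  have hCoef : ((1 - 2 / α) * Real.Gamma (1 - 2 / α)) / (Real.Gamma (1 - 2 / α) * 1)
      = 1 - 2 / α := by
    rw [mul_one, mul_div_assoc, div_self hΓb.ne', mul_one]
  rw [psi, hyp2F1, hΓc, hΓcb, hCoef]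
  have hJ : (∫ t in Ioo (0:ℝ) 1,
      t ^ ((1 - 2 / α) - 1) * (1 - t) ^ ((2 - 2 / α) - (1 - 2 / α) - 1) *
        (1 - (-θ) * t) ^ (-(1:ℝ))) = ∫ s in Ioo (0:ℝ) 1, g s := by
    simp only [hgdef]
  rw [hJ]
  have hα2 : α - 2 ≠ 0 := by linarith
  generalize (∫ s in Ioo (0:ℝ) 1, g s) = J
  field_simp
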